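/- If n is a positive integer with n > 6, then Euler's totient function satisfies φ(n) ≥ n / log₂(n). -/

import Mathlib

open Finset

/-- Product over a finite set of naturals all `≥ 2` (distinct) satisfies
`∏ (1 - 1/p) ≥ 1/(card + 1)`. -/
lemma aux_prod_ge (S : Finset ℕ) (h2 : ∀ p ∈ S, 2 ≤ p) :
    (1 : ℚ) ≤ (S.card + 1) * ∏ p ∈ S, (1 - (p : ℚ)⁻¹) := by
  induction S using Finset.induction_on_max with
  | empty => simp
  | insert a s ha ih =>
    have h2' : ∀ p ∈ s, 2 ≤ p := fun p hp => h2 p (mem_insert_of_mem hp)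
    have ha2 : 2 ≤ a := h2 a (mem_insert_self a s)
    have hs : s ⊆ Finset.Ico 2 a := by
      intro p hp
      exact Finset.mem_Ico.mpr ⟨h2' p hp, ha p hp⟩
    have hcard : s.card ≤ a - 2 := by
      simpa using Finset.card_le_card hs
    have hcard' : (s.card : ℚ) + 2 ≤ (a : ℚ) := by
      have : s.card + 2 ≤ a := by omega
      exact_mod_cast this
    have hane : a ∉ s := fun h => lt_irrefl a (ha a h)
    rw [Finset.prod_insert hane, Finset.card_insert_of_notMem hane]
    have hP := ih h2'
    have haQ : (0 : ℚ) < (a : ℚ) := by positivity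
    have key : (s.card + 1 : ℚ) ≤ (s.card + 1 + 1) * (1 - (a : ℚ)⁻¹) := by
      have h1 : ((s.card : ℚ) + 1 + 1) * (a : ℚ)⁻¹ ≤ 1 := by
        rw [mul_inv_le_iff₀ haQ, one_mul]
        linarith
      rw [mul_sub, mul_one]
      linarith
    have hfac : (0 : ℚ) ≤ 1 - (a : ℚ)⁻¹ := by
      have : (a : ℚ)⁻¹ ≤ 1 := by
        rw [inv_le_one_iff₀]; right; exact_mod_cast le_trans one_le_two ha2
      linarith
    calc (1 : ℚ) ≤ (s.card + 1) * ∏ p ∈ s, (1 - (p : ℚ)⁻¹) := hP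
      _ ≤ ((s.card + 1 + 1) * (1 - (a : ℚ)⁻¹)) * ∏ p ∈ s, (1 - (p : ℚ)⁻¹) := by
          apply mul_le_mul_of_nonneg_right key
          apply Finset.prod_nonneg
          intro p hp
          have : (p : ℚ)⁻¹ ≤ 1 := by
            rw [inv_le_one_iff₀]; right
            exact_mod_cast le_trans one_le_two (h2' p hp)
          linarith
      _ = (↑(s.card + 1) + 1) * ((1 - (a : ℚ)⁻¹) * ∏ p ∈ s, (1 - (p : ℚ)⁻¹)) := by
          push_cast; ring

/-- `n ≤ (ω(n)+1) · φ(n)` in `ℚ`. -/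
lemma nat_le_totient_mul (n : ℕ) :
    (n : ℚ) ≤ (n.primeFactors.card + 1) * n.totient := by
  have h := Nat.totient_eq_mul_prod_factors n
  have h2 : ∀ p ∈ n.primeFactors, 2 ≤ p := fun p hp =>
    (Nat.prime_of_mem_primeFactors hp).two_le
  have key := aux_prod_ge n.primeFactors h2
  have hn0 : (0 : ℚ) ≤ (n : ℚ) := by positivity
  calc (n : ℚ) = (n : ℚ) * 1 := (mul_one _).symm
    _ ≤ (n : ℚ) * ((n.primeFactors.card + 1) * ∏ p ∈ n.primeFactors, (1 - (p : ℚ)⁻¹)) :=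
        mul_le_mul_of_nonneg_left key hn0
    _ = (n.primeFactors.card + 1) * ((n : ℚ) * ∏ p ∈ n.primeFactors, (1 - (p : ℚ)⁻¹)) := by ring
    _ = (n.primeFactors.card + 1) * n.totient := by rw [← h]

/-- For `n > 6`, `2^(ω(n)+1) ≤ n`. -/
lemma two_pow_omega_le (n : ℕ) (hn : 6 < n) :
    2 ^ (n.primeFactors.card + 1) ≤ n := by
  set k := n.primeFactors.card with hk
  have hrad : ∏ p ∈ n.primeFactors, p ∣ n := Nat.prod_primeFactors_dvd n
  have hn0 : n ≠ 0 := by omega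
  have h2 : ∀ p ∈ n.primeFactors, 2 ≤ p := fun p hp =>
    (Nat.prime_of_mem_primeFactors hp).two_le
  have hradle : ∏ p ∈ n.primeFactors, p ≤ n := Nat.le_of_dvd (by omega) hrad
  rcases Nat.lt_or_ge k 3 with hk3 | hk3
  · -- k ≤ 2
    rcases Nat.lt_or_ge k 2 with hk2 | hk2
    · -- k ≤ 1 : 2^(k+1) ≤ 4 ≤ n
      have : 2 ^ (k + 1) ≤ 4 := by interval_cases k <;> norm_num
      omega
    · -- k = 2 : need 8 ≤ n
      have hk2' : k = 2 := by omega
      by_contra h'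
      have hn7 : n = 7 := by
        rw [hk2'] at h'
        omega
      have : n.primeFactors = {7} := by
        rw [hn7]
        exact Nat.Prime.primeFactors (by norm_num)
      rw [hk, this] at hk2'
      simp at hk2'
  · -- k ≥ 3 : there is a prime factor ≥ 5
    obtain ⟨p, hp, hp5⟩ : ∃ p ∈ n.primeFactors, 5 ≤ p := by
      by_contra h'
      push_neg at h'
      have hsub : n.primeFactors ⊆ ({2, 3} : Finset ℕ) := by
        intro q hq
        have hq5 := h' q hq
        have hqp := Nat.prime_of_mem_primeFactors hq
        have hq2 := hqp.two_le
        interval_cases q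
        · simp
        · simp
        · norm_num at hqp
      have := Finset.card_le_card hsub
      simp at this
      omega
    have herase : 2 ^ (n.primeFactors.erase p).card ≤ ∏ q ∈ n.primeFactors.erase p, q := by
      rw [← Finset.prod_const]
      exact Finset.prod_le_prod' fun q hq => h2 q (Finset.mem_of_mem_erase hq)
    have hcarde : (n.primeFactors.erase p).card = k - 1 := by
      rw [Finset.card_erase_of_mem hp, hk]
    rw [hcarde] at herase
    have hsplit : ∏ q ∈ n.primeFactors, q = p * ∏ q ∈ n.primeFactors.erase p, q :=
      (Finset.mul_prod_erase _ _ hp).symm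
    have : 2 ^ (k + 1) ≤ ∏ q ∈ n.primeFactors, q := by
      rw [hsplit]
      calc 2 ^ (k + 1) = 4 * 2 ^ (k - 1) := by
            have : k + 1 = 2 + (k - 1) := by omega
            rw [this, pow_add]
            norm_num
        _ ≤ p * ∏ q ∈ n.primeFactors.erase p, q :=
            Nat.mul_le_mul (by omega) herase
    omega

theorem totient_lower_bound_log2 (n : ℕ) (hn : 6 < n) :
    (n : ℝ) / Real.logb 2 n ≤ (Nat.totient n : ℝ) := by
  have hφ : (n : ℝ) ≤ (n.primeFactors.card + 1) * n.totient := by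
    exact_mod_cast nat_le_totient_mul n
  have hpow := two_pow_omega_le n hn
  have hn1 : (1 : ℝ) < n := by exact_mod_cast (by omega : 1 < n)
  have hlog_pos : 0 < Real.logb 2 n := Real.logb_pos one_lt_two hn1
  have hcard : (n.primeFactors.card + 1 : ℝ) ≤ Real.logb 2 n := by
    have h1 : ((2 : ℝ) ^ (n.primeFactors.card + 1) : ℝ) ≤ n := by
      exact_mod_cast hpow
    have h2 := Real.logb_le_logb_of_le (by norm_num : (1:ℝ) < 2) (by positivity) h1
    rw [Real.logb_pow, Real.logb_self_eq_one (by norm_num : (1:ℝ) < 2)] at h2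
    push_cast at h2 ⊢
    linarith
  rw [div_le_iff₀ hlog_pos]
  calc (n : ℝ) ≤ (n.primeFactors.card + 1) * n.totient := hφ
    _ ≤ Real.logb 2 n * n.totient := by
        apply mul_le_mul_of_nonneg_right hcard
        positivity
    _ = (n.totient : ℝ) * Real.logb 2 n := by ring
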